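/- If a decomposable and smooth arithmetic circuit AC(X) computes a factor f(X), then replacing every +-node by a max-node and evaluating at a full instantiation x yields a value AC_max(x) ≤ f(x), with equality not holding in general when the circuit is not deterministic. -/
import Mathlib


/-- An arithmetic circuit over variables `ι` with values `α`: leaves are indicator
variables `λ_{i,v}` or real parameters; internal nodes are sums or products. -/
inductive AC (ι α : Type) : Type where
  | ind (i : ι) (v : α)
  | param (θ : ℝ)
  | sum (l r : AC ι α)
  | prod (l r : AC ι α)

namespace AC

variable {ι α : Type} [Fintype ι] [DecidableEq ι] [Fintype α] [DecidableEq α]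

/-- Evaluate the circuit under a circuit input `Λ` assigning 0/1 to each indicator. -/
def eval (Λ : ι → α → Bool) : AC ι α → ℝ
  | ind i v => if Λ i v then 1 else 0
  | param θ => θ
  | sum l r => l.eval Λ + r.eval Λ
  | prod l r => l.eval Λ * r.eval Λ

/-- Evaluate the maximizer circuit (sum nodes replaced by max nodes). -/
def evalMax (Λ : ι → α → Bool) : AC ι α → ℝ
  | ind i v => if Λ i v then 1 else 0
  | param θ => θ
  | sum l r => max (l.evalMax Λ) (r.evalMax Λ)
  | prod l r => l.evalMax Λ * r.evalMax Λ

/-- The circuit input corresponding to a full instantiation `x`. -/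
def inputOf (x : ι → α) : ι → α → Bool := fun i v => decide (x i = v)

/-- The circuit input corresponding to a partial instantiation `y`:
an indicator is set to 1 iff its value is compatible with `y`. -/
def pinputOf (y : ι → Option α) : ι → α → Bool := fun i v =>
  match y i with
  | none => true
  | some w => decide (w = v)

/-- The value `AC(x)` of the circuit at a full instantiation `x`. -/
def evalAt (x : ι → α) (c : AC ι α) : ℝ := c.eval (inputOf x)

/-- The value `AC(y)` of the circuit at a partial instantiation `y`. -/
def evalP (y : ι → Option α) (c : AC ι α) : ℝ := c.eval (pinputOf y)

/-- Maximizer-circuit value at a full instantiation. -/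
def evalMaxAt (x : ι → α) (c : AC ι α) : ℝ := c.evalMax (inputOf x)

/-- Maximizer-circuit value at a partial instantiation. -/
def evalMaxP (y : ι → Option α) (c : AC ι α) : ℝ := c.evalMax (pinputOf y)

/-- `vars n`: variables with some indicator at or under the node. -/
def vars : AC ι α → Finset ι
  | ind i _ => {i}
  | param _ => ∅
  | sum l r => l.vars ∪ r.vars
  | prod l r => l.vars ∪ r.vars

/-- The multiset of parameters appearing in the circuit. -/
def params : AC ι α → Multiset ℝ
  | ind _ _ => 0
  | param θ => {θ}
  | sum l r => l.params + r.params
  | prod l r => l.params + r.params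

/-- Decomposability: children of every `*`-node have disjoint variable sets. -/
def Decomposable : AC ι α → Prop
  | ind _ _ => True
  | param _ => True
  | sum l r => l.Decomposable ∧ r.Decomposable
  | prod l r => Disjoint l.vars r.vars ∧ l.Decomposable ∧ r.Decomposable

/-- Smoothness: every child of a `+`-node mentions the same variables as the node. -/
def Smooth : AC ι α → Prop
  | ind _ _ => True
  | param _ => True
  | sum l r => l.vars = r.vars ∧ l.Smooth ∧ r.Smooth
  | prod l r => l.Smooth ∧ r.Smooth

/-- Determinism: under every full instantiation, every `+`-node has at most one
non-zero input. -/
def Deterministic : AC ι α → Prop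
  | ind _ _ => True
  | param _ => True
  | sum l r => (∀ x : ι → α, l.evalAt x = 0 ∨ r.evalAt x = 0) ∧
      l.Deterministic ∧ r.Deterministic
  | prod l r => l.Deterministic ∧ r.Deterministic

/-- A full instantiation `x` is compatible with a partial instantiation `y`. -/
def Compat (x : ι → α) (y : ι → Option α) : Prop :=
  ∀ i, y i = none ∨ y i = some (x i)

instance (x : ι → α) (y : ι → Option α) : Decidable (Compat x y) := by
  unfold Compat; infer_instance

/-- The graph of a full instantiation, i.e. its term `{(i, x i) | i}`. -/
def graphOf (x : ι → α) : Finset (ι × α) := Finset.univ.image fun i => (i, x i)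

/-- The marginal `Σ_{x ∼ y} f(x)` of a factor `f` at a partial instantiation `y`. -/
def margSum (f : (ι → α) → ℝ) (y : ι → Option α) : ℝ :=
  ∑ x : ι → α, if Compat x y then f x else 0

/-- The circuit computes the factor `f`. -/
def Computes (c : AC ι α) (f : (ι → α) → ℝ) : Prop := ∀ x, c.evalAt x = f x

/-- The circuit computes the marginals of the factor `f`. -/
def ComputesMarginals (c : AC ι α) (f : (ι → α) → ℝ) : Prop :=
  ∀ y : ι → Option α, c.evalP y = margSum f y

/-- The multiset of (term, coefficient) pairs of all complete subcircuits. -/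
def subs : AC ι α → Multiset (Finset (ι × α) × ℝ)
  | ind i v => {({(i, v)}, 1)}
  | param θ => {(∅, θ)}
  | sum l r => l.subs + r.subs
  | prod l r => l.subs.bind fun a => r.subs.map fun b => (a.1 ∪ b.1, a.2 * b.2)

/-- Complete subcircuits of a circuit: choose one child of each `+`-node and all
children of each `*`-node. -/
inductive Sub : AC ι α → Type where
  | ind (i : ι) (v : α) : Sub (AC.ind i v)
  | param (θ : ℝ) : Sub (AC.param θ)
  | sumL {l r : AC ι α} : Sub l → Sub (AC.sum l r)
  | sumR {l r : AC ι α} : Sub r → Sub (AC.sum l r)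
  | prod {l r : AC ι α} : Sub l → Sub r → Sub (AC.prod l r)

/-- The term of a complete subcircuit: the set of indicator values appearing in it. -/
def Sub.term : {c : AC ι α} → Sub c → Finset (ι × α)
  | _, .ind i v => {(i, v)}
  | _, .param _ => ∅
  | _, .sumL s => s.term
  | _, .sumR s => s.term
  | _, .prod s t => s.term ∪ t.term

/-- The coefficient of a complete subcircuit: the product of its parameters. -/
def Sub.coeff : {c : AC ι α} → Sub c → ℝ
  | _, .ind _ _ => 1
  | _, .param θ => θ
  | _, .sumL s => s.coeff
  | _, .sumR s => s.coeff
  | _, .prod s t => s.coeff * t.coeff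


end AC


lemma AC.eval_nonneg {ι α : Type} (Λ : ι → α → Bool) (c : AC ι α)
    (h : ∀ θ ∈ c.params, 0 ≤ θ) : 0 ≤ c.eval Λ := by
  induction c with
  | ind i v => simp [AC.eval]; positivity
  | param θ => exact h θ (by simp [AC.params])
  | sum l r hl hr =>
    have := hl (fun θ hθ => h θ (by simp [AC.params, hθ]))
    have := hr (fun θ hθ => h θ (by simp [AC.params, hθ]))
    simp [AC.eval]; linarith
  | prod l r hl hr =>
    have := hl (fun θ hθ => h θ (by simp [AC.params, hθ]))
    have := hr (fun θ hθ => h θ (by simp [AC.params, hθ]))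
    simp [AC.eval]; positivity

lemma AC.evalMax_nonneg {ι α : Type} (Λ : ι → α → Bool) (c : AC ι α)
    (h : ∀ θ ∈ c.params, 0 ≤ θ) : 0 ≤ c.evalMax Λ := by
  induction c with
  | ind i v => simp [AC.evalMax]; positivity
  | param θ => exact h θ (by simp [AC.params])
  | sum l r hl hr =>
    have := hl (fun θ hθ => h θ (by simp [AC.params, hθ]))
    simp only [AC.evalMax]
    exact le_trans this (le_max_left _ _)
  | prod l r hl hr =>
    have := hl (fun θ hθ => h θ (by simp [AC.params, hθ]))
    have := hr (fun θ hθ => h θ (by simp [AC.params, hθ]))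
    simp [AC.evalMax]; positivity

lemma AC.evalMax_le_eval {ι α : Type} (Λ : ι → α → Bool) (c : AC ι α)
    (h : ∀ θ ∈ c.params, 0 ≤ θ) : c.evalMax Λ ≤ c.eval Λ := by
  induction c with
  | ind i v => simp [AC.evalMax, AC.eval]
  | param θ => simp [AC.evalMax, AC.eval]
  | sum l r hl hr =>
    have hl' := hl (fun θ hθ => h θ (by simp [AC.params, hθ]))
    have hr' := hr (fun θ hθ => h θ (by simp [AC.params, hθ]))
    have nl := AC.eval_nonneg Λ l (fun θ hθ => h θ (by simp [AC.params, hθ]))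
    have nr := AC.eval_nonneg Λ r (fun θ hθ => h θ (by simp [AC.params, hθ]))
    simp only [AC.evalMax, AC.eval, max_le_iff]
    constructor <;> linarith
  | prod l r hl hr =>
    have hl' := hl (fun θ hθ => h θ (by simp [AC.params, hθ]))
    have hr' := hr (fun θ hθ => h θ (by simp [AC.params, hθ]))
    have ml := AC.evalMax_nonneg Λ l (fun θ hθ => h θ (by simp [AC.params, hθ]))
    have mr := AC.evalMax_nonneg Λ r (fun θ hθ => h θ (by simp [AC.params, hθ]))
    have nl := AC.eval_nonneg Λ l (fun θ hθ => h θ (by simp [AC.params, hθ]))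
    simp only [AC.evalMax, AC.eval]
    exact mul_le_mul hl' hr' mr nl

/-- For a decomposable and smooth circuit computing a factor `f`, the maximizer
circuit's value at any full instantiation is at most `f(x)`; and equality can fail
without determinism: the circuit `2λ_x + 3λ_x + λ_¬x` computes `f(x) = 5` but its
maximizer evaluates to `3 < 5`. -/
theorem stmt18 {ι α : Type} [Fintype ι] [DecidableEq ι] [Fintype α] [DecidableEq α] :
    (∀ (c : AC ι α) (f : (ι → α) → ℝ), c.Decomposable → c.Smooth →
      c.vars = Finset.univ → (∀ θ ∈ c.params, 0 ≤ θ) → c.Computes f →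
      ∀ x : ι → α, c.evalMaxAt x ≤ f x) ∧
    (∃ (c : AC (Fin 1) Bool) (f : (Fin 1 → Bool) → ℝ),
      c.Decomposable ∧ c.Smooth ∧ c.vars = Finset.univ ∧
      (∀ θ ∈ c.params, 0 ≤ θ) ∧ c.Computes f ∧ ¬ c.Deterministic ∧
      ∃ x : Fin 1 → Bool, c.evalMaxAt x < f x) := by
  constructor
  · intro c f _ _ _ hθ hc x
    rw [← hc x]
    exact AC.evalMax_le_eval (AC.inputOf x) c hθ
  · refine ⟨AC.sum (AC.sum (AC.prod (AC.param 2) (AC.ind 0 true))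
      (AC.prod (AC.param 3) (AC.ind 0 true))) (AC.ind 0 false),
      fun x => if x 0 then 5 else 1, ?_, ?_, ?_, ?_, ?_, ?_, ?_⟩
    · simp [AC.Decomposable, AC.vars]
    · simp [AC.Smooth, AC.vars]
    · decide
    · intro θ hθ
      simp [AC.params] at hθ
      rcases hθ with h | h <;> simp [h] <;> norm_num
    · intro x
      by_cases hx : x 0 <;>
        simp [AC.Computes, AC.evalAt, AC.eval, AC.inputOf, hx] <;> norm_num
    · intro hd
      obtain ⟨-, ⟨h1, -⟩, -⟩ := hd
      have := h1 (fun _ => true)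
      simp [AC.evalAt, AC.eval, AC.inputOf] at this
    · refine ⟨fun _ => true, ?_⟩
      simp [AC.evalMaxAt, AC.evalMax, AC.inputOf]
      norm_num
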